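/- Let f, n, m be natural numbers with n > 3f and m ≥ n − f. Let P be a multiset of real numbers with card P = n and let U be a sub-multiset of P with card U = m. Then for every x ∈ U, the destination D(x, P) = (min(x, P_(f+1)) + max(x, P_(n−f)))/2 satisfies both D(x, P) ≤ (U_(f+1) + max U)/2 and (min U + U_(m−f))/2 ≤ D(x, P). -/

import Mathlib

/-- The k-th smallest element (1-indexed, counted with multiplicity) of a
multiset of real numbers. -/
noncomputable def nth (S : Multiset ℝ) (k : ℕ) : ℝ :=
  (S.sort (· ≤ ·)).getD (k - 1) 0

/-- The smallest element of a (nonempty) multiset of reals. -/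
noncomputable def mmin (S : Multiset ℝ) : ℝ := nth S 1

/-- The largest element of a (nonempty) multiset of reals. -/
noncomputable def mmax (S : Multiset ℝ) : ℝ := nth S S.card

/-- The diameter of a (nonempty) multiset of reals. -/
noncomputable def mdiam (S : Multiset ℝ) : ℝ := mmax S - mmin S



open List in
lemma lemC {l : List ℝ} (h : l.Pairwise (· ≤ ·)) {i j : ℕ} (hij : i ≤ j)
    (hj : j < l.length) : l.getD i 0 ≤ l.getD j 0 := by
  have hi : i < l.length := lt_of_le_of_lt hij hj
  rw [List.getD_eq_getElem _ _ hi, List.getD_eq_getElem _ _ hj]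
  exact h.rel_get_of_le hij

open List in
lemma lemA {l₁ l₂ : List ℝ} (h : l₁ <+ l₂) (hs : l₂.Pairwise (· ≤ ·)) :
    ∀ i, i < l₁.length → l₂.getD i 0 ≤ l₁.getD i 0 := by
  induction h with
  | slnil => intro i hi; simp at hi
  | @cons l₁ l₂ a h ih =>
    intro i hi
    have h1 : i < l₂.length := lt_of_lt_of_le hi h.length_le
    calc (a :: l₂).getD i 0 ≤ (a :: l₂).getD (i+1) 0 := by
          apply lemC hs (by omega); simpa using h1
      _ = l₂.getD i 0 := by simp
      _ ≤ l₁.getD i 0 := ih (hs.of_cons) i hi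
  | @cons_cons l₁ l₂ a h ih =>
    intro i hi
    match i with
    | 0 => simp
    | j + 1 =>
      simp only [List.getD_cons_succ]
      exact ih hs.of_cons j (by simpa using hi)

open List in
lemma lemB {l₁ l₂ : List ℝ} (h : l₁ <+ l₂) (hs : l₂.Pairwise (· ≤ ·)) :
    ∀ i, i < l₁.length → l₁.getD i 0 ≤ l₂.getD (i + (l₂.length - l₁.length)) 0 := by
  induction h with
  | slnil => intro i hi; simp at hi
  | @cons l₁ l₂ a h ih =>
    intro i hi
    have hle : l₁.length ≤ l₂.length := h.length_le
    have : i + ((a :: l₂).length - l₁.length) = (i + (l₂.length - l₁.length)) + 1 := by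
      simp only [List.length_cons]; omega
    rw [this, List.getD_cons_succ]
    exact ih hs.of_cons i hi
  | @cons_cons l₁ l₂ a h ih =>
    intro i hi
    have hle : l₁.length ≤ l₂.length := h.length_le
    have hd : (a :: l₂).length - (a :: l₁).length = l₂.length - l₁.length := by
      simp only [List.length_cons]; omega
    rw [hd]
    match i with
    | 0 =>
      simp only [List.getD_cons_zero, Nat.zero_add]
      apply lemC hs (Nat.zero_le _)
      simp only [List.length_cons]; omega
    | j + 1 =>
      have : j + 1 + (l₂.length - l₁.length) = (j + (l₂.length - l₁.length)) + 1 := by omega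
      rw [this, List.getD_cons_succ, List.getD_cons_succ]
      exact ih hs.of_cons j (by simpa using hi)

lemma lemD {l : List ℝ} (hs : l.Pairwise (· ≤ ·)) {x : ℝ} (hx : x ∈ l) :
    l.getD 0 0 ≤ x ∧ x ≤ l.getD (l.length - 1) 0 := by
  obtain ⟨k, hk, rfl⟩ := List.getElem_of_mem hx
  have h0 : (l.getD k 0) = l[k] := List.getD_eq_getElem _ _ hk
  constructor
  · rw [← h0]; exact lemC hs (Nat.zero_le _) hk
  · rw [← h0]; exact lemC hs (by omega) (by omega)

open List in
lemma sort_sublist {U P : Multiset ℝ} (h : U ≤ P) :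
    (U.sort (· ≤ ·)) <+ (P.sort (· ≤ ·)) := by
  apply List.sublist_of_subperm_of_pairwise _ (Multiset.pairwise_sort _ _) (Multiset.pairwise_sort _ _)
  rw [← Multiset.coe_le]
  simpa [Multiset.sort_eq] using h

theorem stmt7 (f n m : ℕ) (P U : Multiset ℝ)
    (hn : n > 3 * f) (hm : m ≥ n - f)
    (hP : Multiset.card P = n) (hU : U ≤ P) (hUm : Multiset.card U = m) :
    ∀ x ∈ U,
      (min x (nth P (f + 1)) + max x (nth P (n - f))) / 2 ≤
        (nth U (f + 1) + mmax U) / 2 ∧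
      (mmin U + nth U (m - f)) / 2 ≤
        (min x (nth P (f + 1)) + max x (nth P (n - f))) / 2 := by
  intro x hx
  have hsub := sort_sublist hU
  have hsU := Multiset.pairwise_sort U (· ≤ ·)
  have hsP := Multiset.pairwise_sort P (· ≤ ·)
  have hlU : (U.sort (· ≤ ·)).length = m := by rw [Multiset.length_sort, hUm]
  have hlP : (P.sort (· ≤ ·)).length = n := by rw [Multiset.length_sort, hP]
  have hmn : m ≤ n := by rw [← hlU, ← hlP]; exact hsub.length_le
  have hfm : f + 1 ≤ m := by omega
  have hxmem : x ∈ U.sort (· ≤ ·) := (Multiset.mem_sort _).mpr hx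
  obtain ⟨hx1, hx2⟩ := lemD hsU hxmem
  rw [hlU] at hx2
  have hA := lemA hsub hsP
  have hB := lemB hsub hsP
  simp only [hlU, hlP] at hA hB
  -- four key inequalities
  have A1 : (P.sort (· ≤ ·)).getD f 0 ≤ (U.sort (· ≤ ·)).getD f 0 := hA f (by omega)
  have A2 : (P.sort (· ≤ ·)).getD (n - f - 1) 0 ≤ (U.sort (· ≤ ·)).getD (m - 1) 0 :=
    le_trans (lemC hsP (by omega) (by omega)) (hA (m - 1) (by omega))
  have B1 : (U.sort (· ≤ ·)).getD 0 0 ≤ (P.sort (· ≤ ·)).getD f 0 := by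
    have := hB 0 (by omega)
    exact le_trans this (lemC hsP (by omega) (by omega))
  have B2 : (U.sort (· ≤ ·)).getD (m - f - 1) 0 ≤ (P.sort (· ≤ ·)).getD (n - f - 1) 0 := by
    have := hB (m - f - 1) (by omega)
    rwa [show m - f - 1 + (n - m) = n - f - 1 by omega] at this
  unfold mmax mmin nth
  rw [hUm]
  simp only [Nat.add_sub_cancel, Nat.sub_self]
  have hmin1 : min x ((P.sort (· ≤ ·)).getD (f + 1 - 1) 0) ≤ (U.sort (· ≤ ·)).getD (f + 1 - 1) 0 := by
    simpa using le_trans (min_le_right _ _) A1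
  have hmax1 : max x ((P.sort (· ≤ ·)).getD (n - f - 1) 0) ≤ (U.sort (· ≤ ·)).getD (m - 1) 0 :=
    max_le hx2 A2
  have hmin2 : (U.sort (· ≤ ·)).getD (1 - 1) 0 ≤ min x ((P.sort (· ≤ ·)).getD (f + 1 - 1) 0) := by
    simp only [Nat.add_sub_cancel, Nat.sub_self]
    exact le_min hx1 B1
  have hmax2 : (U.sort (· ≤ ·)).getD (m - f - 1) 0 ≤ max x ((P.sort (· ≤ ·)).getD (n - f - 1) 0) :=
    le_trans B2 (le_max_right _ _)
  constructor <;> [skip; skip] <;>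
    · simp only [Nat.add_sub_cancel, Nat.sub_self] at hmin1 hmin2 ⊢
      linarith
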